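/- Let D be a directed network on node set N with #N ≥ 3. If an intermediary i is uncontested in D, then i is a middleman, i.e., i ∈ M(D). -/

import Mathlib

open Finset

variable {V : Type*} [Fintype V] [DecidableEq V]

/-- The arc set is irreflexive: no loops. -/
def IrreflArcs (D : Finset (V × V)) : Prop := ∀ i : V, (i, i) ∉ D

/-- `l` is an `(i,j)`-path in `D`: a list of pairwise distinct nodes, of length at
least 2, starting at `i`, ending at `j`, consecutive nodes joined by arcs of `D`. -/
def IsPath (D : Finset (V × V)) (i j : V) (l : List V) : Prop :=
  l.Nodup ∧ l.Chain' (fun a b => (a, b) ∈ D) ∧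
    l.head? = some i ∧ l.getLast? = some j ∧ 2 ≤ l.length

/-- Node `i` is connected to node `j`: there is at least one `(i,j)`-path. -/
def Conn (D : Finset (V × V)) (i j : V) : Prop := ∃ l : List V, IsPath D i j l

/-- The direct successors `s_i(D)`. -/
def dsucc (D : Finset (V × V)) (i : V) : Finset V := univ.filter fun j => (i, j) ∈ D

/-- The direct predecessors `p_i(D)`. -/
def dpred (D : Finset (V × V)) (i : V) : Finset V := univ.filter fun j => (j, i) ∈ D

open scoped Classical in
/-- The successor set `S_i(D)`: all nodes to which `i` is connected. -/
noncomputable def succC (D : Finset (V × V)) (i : V) : Finset V :=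
  univ.filter fun j => Conn D i j

open scoped Classical in
/-- The predecessor set `P_i(D)`: all nodes that are connected to `i`. -/
noncomputable def predC (D : Finset (V × V)) (i : V) : Finset V :=
  univ.filter fun j => Conn D j i

/-- An intermediary: at least one direct predecessor, at least one direct successor,
and at least two distinct direct neighbours. -/
def Intermediary (D : Finset (V × V)) (i : V) : Prop :=
  (dpred D i).Nonempty ∧ (dsucc D i).Nonempty ∧ 2 ≤ (dsucc D i ∪ dpred D i).card

/-- The induced subnetwork `D_M` on a node set `M`. -/
def inducedOn (D : Finset (V × V)) (M : Finset V) : Finset (V × V) :=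
  D.filter fun e => e.1 ∈ M ∧ e.2 ∈ M

/-- The reduced network `D − i`. -/
def removeNode (D : Finset (V × V)) (i : V) : Finset (V × V) :=
  D.filter fun e => e.1 ≠ i ∧ e.2 ≠ i

/-- The reduced network `D − C`, removing a node set `C`. -/
def removeNodes (D : Finset (V × V)) (C : Finset V) : Finset (V × V) :=
  D.filter fun e => e.1 ∉ C ∧ e.2 ∉ C

/-- `h` is an `(i,j)`-middleman: `i ≠ j`, `h ∉ {i,j}`, there is at least one
`(i,j)`-path, and `h` lies on every `(i,j)`-path. -/
def MmBetween (D : Finset (V × V)) (h i j : V) : Prop :=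
  i ≠ j ∧ h ≠ i ∧ h ≠ j ∧ Conn D i j ∧ ∀ l : List V, IsPath D i j l → h ∈ l

/-- `h` is a middleman: an intermediary that is an `(i,j)`-middleman for some pair. -/
def IsMiddleman (D : Finset (V × V)) (h : V) : Prop :=
  Intermediary D h ∧ ∃ i j : V, MmBetween D h i j

/-- The network is weakly connected. -/
def WeakConn (D : Finset (V × V)) : Prop :=
  ∀ i j : V, i ≠ j → Conn D i j ∨ Conn D j i

/-- The network `(M, D_M)` is weakly connected. -/
def WeakConnOn (D : Finset (V × V)) (M : Finset V) : Prop :=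
  ∀ i ∈ M, ∀ j ∈ M, i ≠ j → Conn (inducedOn D M) i j ∨ Conn (inducedOn D M) j i

/-- The network is strongly connected. -/
def StrongConn (D : Finset (V × V)) : Prop :=
  ∀ i j : V, i ≠ j → Conn D i j

/-- `M` is a component of `D`. -/
def IsComponent (D : Finset (V × V)) (M : Finset V) : Prop :=
  WeakConnOn D M ∧ ∀ i ∉ M, ¬ WeakConnOn D (insert i M)

/-- The coverage `Γ_i(D)` of an intermediary `i`. -/
noncomputable def coverage (D : Finset (V × V)) (i : V) : Finset (V × V) :=
  (predC D i ×ˢ succC D i).filter fun e => e.1 ≠ e.2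

/-- The extended coverage `Γ̄_j(D)` of a node `j`. -/
noncomputable def extCoverage (D : Finset (V × V)) (j : V) : Finset (V × V) :=
  insert j (predC D j) ×ˢ insert j (succC D j)

/-- Intermediary `i` is contested by the node set `C ⊆ N \ {i}`. -/
def ContestedBy (D : Finset (V × V)) (i : V) (C : Finset V) : Prop :=
  i ∉ C ∧ coverage D i ⊆ C.biUnion fun j => extCoverage (removeNode D i) j

/-- The brokerage `b_i(D)`. -/
noncomputable def brokerage (D : Finset (V × V)) (i : V) : ℤ :=
  (∑ j ∈ univ.erase i,
      (((succC D j).card : ℤ) - ((succC (removeNode D i) j).card : ℤ)))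
    - ((predC D i).card : ℤ)

/-- The maximal potential brokerage `B(D)`. -/
noncomputable def maxBrokerage (D : Finset (V × V)) : ℤ :=
  ∑ i : V, (((succC D i).card : ℤ) - ((dsucc D i).card : ℤ))

/-- The middleman power measure `ν_i(D) = b_i(D) / max{B(D), 1}`. -/
noncomputable def power (D : Finset (V × V)) (i : V) : ℚ :=
  (brokerage D i : ℚ) / ((max (maxBrokerage D) 1 : ℤ) : ℚ)

/-- The robustness `ρ_i(D)` of a middleman `i`. -/
noncomputable def robustness (D : Finset (V × V)) (i : V) : ℕ :=
  sInf {m : ℕ | ∃ D' : Finset (V × V),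
      IrreflArcs D' ∧ D ⊂ D' ∧ ¬ IsMiddleman D' i ∧ D'.card = m} - D.card

/-- The dual robustness `ρ*_i(D)` of a middleman `i`. -/
noncomputable def dualRobustness (D : Finset (V × V)) (i : V) : ℕ :=
  D.card - sSup {m : ℕ | ∃ D' : Finset (V × V),
      D' ⊆ D ∧ ¬ IsMiddleman D' i ∧ D'.card = m}

/-- The node-robustness `ψ_i(D)` of a middleman `i`. -/
noncomputable def nodeRobustness (D : Finset (V × V)) (i : V) : ℕ :=
  sInf {m : ℕ | ∃ C : Finset V,
      i ∉ C ∧ ¬ IsMiddleman (removeNodes D C) i ∧ C.card = m}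

/-- Direct neighbours in the underlying undirected network. -/
def nbr (D : Finset (V × V)) (i : V) : Finset V := dsucc D i ∪ dpred D i

/-- The local clustering coefficient `C_i = 2 L_i / (d_i (d_i − 1))`, computed here as
the number of ordered adjacent pairs of neighbours divided by `d_i (d_i − 1)`. -/
def clustering (D : Finset (V × V)) (i : V) : ℚ :=
  (((nbr D i ×ˢ nbr D i).filter fun e =>
      e.1 ≠ e.2 ∧ ((e.1, e.2) ∈ D ∨ (e.2, e.1) ∈ D)).card : ℚ)
    / (((nbr D i).card : ℚ) * (((nbr D i).card : ℚ) - 1))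

section AuxLemmas

variable {V : Type*} [Fintype V] [DecidableEq V]

lemma aux_chain'_mono {R S : V → V → Prop} :
    ∀ l : List V, l.Chain' R → (∀ a ∈ l, ∀ b ∈ l, R a b → S a b) → l.Chain' S
  | [], _, _ => List.isChain_nil
  | [_], _, _ => List.isChain_singleton _
  | a :: b :: t, hc, hm => by
      simp only [List.Chain', List.isChain_cons_cons] at hc ⊢
      exact ⟨hm a (by simp) b (by simp) hc.1,
        aux_chain'_mono (b :: t) hc.2 fun x hx y hy h =>
          hm x (List.mem_cons_of_mem _ hx) y (List.mem_cons_of_mem _ hy) h⟩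

lemma conn_ne {D : Finset (V × V)} {a b : V} (h : Conn D a b) : a ≠ b := by
  obtain ⟨l, hnd, _, hh, hl, hlen⟩ := h
  match l, hnd, hh, hl, hlen with
  | x :: y :: t, hnd, hh, hl, _ =>
    simp only [List.head?_cons, Option.some.injEq] at hh
    subst hh
    have hb : b ∈ y :: t := by
      rw [List.getLast?_cons_cons] at hl
      exact List.mem_of_getLast? hl
    intro hab
    subst hab
    exact (List.nodup_cons.mp hnd).1 hb

lemma path_rtg {D : Finset (V × V)} :
    ∀ l : List V, l.Chain' (fun a b => (a, b) ∈ D) → ∀ a b : V,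
      l.head? = some a → l.getLast? = some b →
      Relation.ReflTransGen (fun x y => (x, y) ∈ D) a b
  | [], _, a, b, hh, _ => by simp at hh
  | [x], _, a, b, hh, hl => by
      simp only [List.head?_cons, List.getLast?_singleton, Option.some.injEq] at hh hl
      subst hh; subst hl; exact Relation.ReflTransGen.refl
  | x :: y :: t, hc, a, b, hh, hl => by
      simp only [List.head?_cons, Option.some.injEq] at hh
      subst hh
      simp only [List.Chain', List.isChain_cons_cons] at hc
      rw [List.getLast?_cons_cons] at hl
      exact Relation.ReflTransGen.head hc.1
        (path_rtg (y :: t) hc.2 y b rfl hl)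

lemma conn_of_rtg' {D : Finset (V × V)} {a b : V}
    (hr : Relation.ReflTransGen (fun x y => (x, y) ∈ D) a b) :
    a = b ∨ Conn D a b := by
  induction hr using Relation.ReflTransGen.head_induction_on with
  | refl => exact Or.inl rfl
  | @head x c hstep htail ih =>
    by_cases hxb : x = b
    · exact Or.inl hxb
    right
    rcases ih with heq | hcb
    · exact ⟨[x, b], by simp [hxb], by simp [← heq, hstep, List.Chain'], rfl, rfl, by simp⟩
    · obtain ⟨l, hnd, hch, hhd, hlast, hlen⟩ := hcb
      by_cases hxl : x ∈ l
      · obtain ⟨l₁, l₂, rfl⟩ := List.append_of_mem hxl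
        refine ⟨x :: l₂, ?_, ?_, rfl, ?_, ?_⟩
        · exact (List.Nodup.sublist (List.sublist_append_right l₁ (x :: l₂)) hnd)
        · exact List.IsChain.suffix hch ⟨l₁, rfl⟩
        · rw [List.getLast?_append_cons] at hlast
          exact hlast
        · rcases l₂ with _ | ⟨z, t⟩
          · exfalso
            rw [List.getLast?_append_cons] at hlast
            simp at hlast
            exact hxb hlast
          · simp
      · rcases l with _ | ⟨y, t⟩
        · simp at hhd
        simp only [List.head?_cons, Option.some.injEq] at hhd
        have hstep' : (x, y) ∈ D := by rw [hhd]; exact hstep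
        refine ⟨x :: y :: t, ?_, ?_, rfl, ?_, ?_⟩
        · exact List.nodup_cons.mpr ⟨hxl, hnd⟩
        · exact List.isChain_cons_cons.mpr ⟨hstep', hch⟩
        · rw [List.getLast?_cons_cons]
          exact hlast
        · simp

lemma conn_of_rtg {D : Finset (V × V)} {a b : V}
    (h : Relation.ReflTransGen (fun x y => (x, y) ∈ D) a b) (hne : a ≠ b) :
    Conn D a b := (conn_of_rtg' h).resolve_left hne

lemma conn_trans {D : Finset (V × V)} {a b c : V}
    (h1 : Conn D a b) (h2 : Conn D b c) (hne : a ≠ c) : Conn D a c := by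
  obtain ⟨l1, _, hc1, hh1, hl1, _⟩ := h1
  obtain ⟨l2, _, hc2, hh2, hl2, _⟩ := h2
  exact conn_of_rtg ((path_rtg l1 hc1 a b hh1 hl1).trans (path_rtg l2 hc2 b c hh2 hl2)) hne

end AuxLemmas

/-- If an intermediary `i` is uncontested in `D`, then `i` is a middleman. -/
theorem statement10 {V : Type*} [Fintype V] [DecidableEq V] (D : Finset (V × V))
    (hirr : IrreflArcs D) (hcard : 3 ≤ Fintype.card V)
    (i : V) (hi : Intermediary D i)
    (hu : ¬ ∃ C : Finset V, ContestedBy D i C) :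
    IsMiddleman D i := by
  by_contra hm
  apply hu
  refine ⟨Finset.univ.erase i, Finset.notMem_erase i _, ?_⟩
  intro e he
  simp only [coverage, Finset.mem_filter, Finset.mem_product, predC, succC,
    Finset.mem_filter, Finset.mem_univ, true_and] at he
  obtain ⟨⟨hhi, hij⟩, hhj⟩ := he
  obtain ⟨h, j⟩ := e
  dsimp only at hhi hij hhj
  have hih : i ≠ h := (conn_ne hhi).symm
  have hij' : i ≠ j := conn_ne hij
  have hconn : Conn D h j := conn_trans hhi hij hhj
  have hnm : ¬ MmBetween D i h j := fun hmb => hm ⟨hi, h, j, hmb⟩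
  simp only [MmBetween, not_and] at hnm
  push_neg at hnm
  obtain ⟨l, hl, hil⟩ := hnm hhj hih hij' hconn
  have hpath : IsPath (removeNode D i) h j l := by
    obtain ⟨hnd, hch, hhd, hlst, hlen⟩ := hl
    refine ⟨hnd, ?_, hhd, hlst, hlen⟩
    refine aux_chain'_mono l hch fun a ha b hb hab => ?_
    simp only [removeNode, Finset.mem_filter]
    exact ⟨hab, fun h' => hil (h' ▸ ha), fun h' => hil (h' ▸ hb)⟩
  rw [Finset.mem_biUnion]
  refine ⟨h, Finset.mem_erase.mpr ⟨hih.symm, Finset.mem_univ _⟩, ?_⟩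
  simp only [extCoverage, Finset.mem_product, Finset.mem_insert]
  refine ⟨Or.inl trivial, Or.inr ?_⟩
  simp only [succC, Finset.mem_filter, Finset.mem_univ, true_and]
  exact ⟨l, hpath⟩
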